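/- Let φ : [0,∞) → [0,∞) be an increasing, convex, non-constant function, let R > 0, and let m be a nonnegative integer. Then limsup_{t→∞} ln(∫_{tR}^∞ (z - tR)^m e^{-φ(z)} dz) / φ(Rt) ≥ -1. -/

import Mathlib

open MeasureTheory Filter Set

private lemma stmt6_pow_le_fact_exp (m : ℕ) {x : ℝ} (hx : 0 ≤ x) :
    x ^ m ≤ m.factorial * Real.exp x := by
  have h1 : x ^ m / m.factorial ≤ Real.exp x := by
    calc x ^ m / m.factorial ≤ ∑ i ∈ Finset.range (m+1), x ^ i / i.factorial := by
          refine Finset.single_le_sum (f := fun i => x ^ i / (i.factorial : ℝ))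
            (fun i _ => by positivity) (Finset.self_mem_range_succ m)
      _ ≤ Real.exp x := Real.sum_le_exp_of_nonneg hx _
  have hf : (0:ℝ) < m.factorial := by positivity
  calc x ^ m = (x ^ m / m.factorial) * m.factorial := by field_simp
    _ ≤ Real.exp x * m.factorial := by gcongr
    _ = m.factorial * Real.exp x := mul_comm _ _

private lemma stmt6_linear_lb {φ : ℝ → ℝ} (hmono : MonotoneOn φ (Set.Ici 0))
    (hconv : ConvexOn ℝ (Set.Ici 0) φ)
    (hnonneg : ∀ t ∈ Set.Ici (0:ℝ), 0 ≤ φ t)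
    (hnc : ∃ s t : ℝ, 0 ≤ s ∧ 0 ≤ t ∧ φ s ≠ φ t) :
    ∃ α : ℝ, 0 < α ∧ ∃ β : ℝ, ∀ x, 0 ≤ x → α * x - β ≤ φ x := by
  obtain ⟨s, t, hs, ht, hne⟩ := hnc
  obtain ⟨s', t', hs', hlt, hφlt⟩ :
      ∃ s' t' : ℝ, 0 ≤ s' ∧ s' < t' ∧ φ s' < φ t' := by
    rcases lt_trichotomy s t with h | h | h
    · exact ⟨s, t, hs, h, lt_of_le_of_ne (hmono hs ht h.le) hne⟩
    · exact absurd (congrArg φ h) hne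
    · exact ⟨t, s, ht, h, lt_of_le_of_ne (hmono ht hs h.le) (Ne.symm hne)⟩
  set k := (φ t' - φ s') / (t' - s') with hk
  have hkpos : 0 < k := div_pos (by linarith) (by linarith)
  refine ⟨k, hkpos, k * t', fun x hx => ?_⟩
  rcases le_or_gt x t' with hxt | hxt
  · have := hnonneg x hx
    nlinarith
  · have hslope := hconv.slope_mono_adjacent (Set.mem_Ici.2 hs')
      (Set.mem_Ici.2 (by linarith : (0:ℝ) ≤ x)) hlt hxt
    rw [← hk] at hslope
    have hxt' : 0 < x - t' := by linarith
    have h2 : k * (x - t') ≤ φ x - φ t' := (le_div_iff₀ hxt').mp hslope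
    have h3 := hnonneg t' (Set.mem_Ici.2 (by linarith))
    nlinarith

private lemma stmt6_dom_pointwise {φ : ℝ → ℝ} {α β : ℝ} (hα : 0 < α)
    (hlin : ∀ x, 0 ≤ x → α * x - β ≤ φ x) (m : ℕ) {a z : ℝ} (ha : 0 ≤ a) (hz : a < z) :
    (z - a) ^ m * Real.exp (-φ z) ≤
      (m.factorial * (2/α) ^ m * Real.exp β) * Real.exp (-(α/2) * z) := by
  have hza : 0 ≤ z - a := by linarith
  have h1 : (z - a) ^ m ≤ m.factorial * Real.exp ((α/2) * (z - a)) * (2/α) ^ m := by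
    have := stmt6_pow_le_fact_exp m (x := (α/2) * (z - a)) (by positivity)
    have heq : (z - a) ^ m = ((α/2) * (z - a)) ^ m * (2/α) ^ m := by
      rw [← mul_pow]; congr 1; field_simp
    rw [heq]
    gcongr
  have h2 : Real.exp (-φ z) ≤ Real.exp β * Real.exp (-α * z) := by
    rw [← Real.exp_add]
    apply Real.exp_le_exp.2
    have := hlin z (by linarith)
    linarith
  calc (z - a) ^ m * Real.exp (-φ z)
      ≤ (m.factorial * Real.exp ((α/2) * (z - a)) * (2/α) ^ m) *
        (Real.exp β * Real.exp (-α * z)) :=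
        mul_le_mul h1 h2 (Real.exp_pos _).le (by positivity)
    _ = (m.factorial * (2/α) ^ m * Real.exp β) *
        (Real.exp ((α/2) * (z - a)) * Real.exp (-α * z)) := by ring
    _ ≤ (m.factorial * (2/α) ^ m * Real.exp β) * Real.exp (-(α/2) * z) := by
        have hC : (0:ℝ) ≤ m.factorial * (2/α) ^ m * Real.exp β := by positivity
        apply mul_le_mul_of_nonneg_left _ hC
        rw [← Real.exp_add]
        apply Real.exp_le_exp.2
        nlinarith

private lemma stmt6_integrable {φ : ℝ → ℝ} (hmono : MonotoneOn φ (Set.Ici 0))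
    {α β : ℝ} (hα : 0 < α) (hlin : ∀ x, 0 ≤ x → α * x - β ≤ φ x) (m : ℕ)
    {a : ℝ} (ha : 0 ≤ a) :
    IntegrableOn (fun z => (z - a) ^ m * Real.exp (-φ z)) (Set.Ioi a) := by
  set C : ℝ := m.factorial * (2/α) ^ m * Real.exp β with hC
  have hgint : IntegrableOn (fun z => C * Real.exp (-(α/2) * z)) (Set.Ioi a) :=
    (exp_neg_integrableOn_Ioi a (by positivity)).const_mul C
  have hmax : Monotone fun z : ℝ => φ (max z 0) := fun x y hxy =>
    hmono (Set.mem_Ici.2 (le_max_right x 0)) (Set.mem_Ici.2 (le_max_right y 0))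
      (max_le_max hxy le_rfl)
  have hmeas : Measurable fun z : ℝ => φ (max z 0) := hmax.measurable
  have heq : Set.EqOn (fun z => (z - a) ^ m * Real.exp (-φ (max z 0)))
      (fun z => (z - a) ^ m * Real.exp (-φ z)) (Set.Ioi a) := by
    intro z hz
    have : max z 0 = z := max_eq_left (le_of_lt (lt_of_le_of_lt ha hz))
    simp [this]
  refine IntegrableOn.congr_fun ?_ heq measurableSet_Ioi
  refine Integrable.mono' hgint ?_ ?_
  · exact ((measurable_id.sub_const a).pow_const m).aestronglyMeasurable.mul
      (hmeas.neg.exp.aestronglyMeasurable)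
  · filter_upwards [ae_restrict_mem measurableSet_Ioi] with z hz
    have hz' : a < z := hz
    have hmx : max z 0 = z := max_eq_left (le_of_lt (lt_of_le_of_lt ha hz'))
    rw [hmx, Real.norm_eq_abs,
      abs_of_nonneg (mul_nonneg (pow_nonneg (by linarith) m) (Real.exp_pos _).le)]
    exact stmt6_dom_pointwise hα hlin m ha hz'

private lemma stmt6_lower_bound {φ : ℝ → ℝ} (hmono : MonotoneOn φ (Set.Ici 0)) (m : ℕ)
    {a δ : ℝ} (ha : 0 ≤ a) (hδ : 0 < δ)
    (hint : IntegrableOn (fun z => (z - a) ^ m * Real.exp (-φ z)) (Set.Ioi a)) :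
    Real.exp (-φ (a + δ)) * (δ ^ (m+1) / (m+1)) ≤
      ∫ z in Set.Ioi a, (z - a) ^ m * Real.exp (-φ z) := by
  have hnn : 0 ≤ᵐ[volume.restrict (Set.Ioi a)] fun z => (z - a) ^ m * Real.exp (-φ z) := by
    filter_upwards [ae_restrict_mem measurableSet_Ioi] with z hz
    have h1 : a < z := hz
    have : (0:ℝ) ≤ z - a := by linarith
    positivity
  have step1 : (∫ z in Set.Ioc a (a + δ), (z - a) ^ m * Real.exp (-φ z)) ≤
      ∫ z in Set.Ioi a, (z - a) ^ m * Real.exp (-φ z) :=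
    setIntegral_mono_set hint hnn (HasSubset.Subset.eventuallyLE Ioc_subset_Ioi_self)
  have hcont : Continuous fun z : ℝ => (z - a) ^ m * Real.exp (-φ (a + δ)) := by continuity
  have step2 : (∫ z in Set.Ioc a (a + δ), (z - a) ^ m * Real.exp (-φ (a + δ))) ≤
      ∫ z in Set.Ioc a (a + δ), (z - a) ^ m * Real.exp (-φ z) := by
    refine setIntegral_mono_on (hcont.integrableOn_Ioc) (hint.mono_set Ioc_subset_Ioi_self)
      measurableSet_Ioc (fun z hz => ?_)
    have h1 : a < z := hz.1
    have h2 : z ≤ a + δ := hz.2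
    have hφ : φ z ≤ φ (a + δ) :=
      hmono (Set.mem_Ici.2 (by linarith)) (Set.mem_Ici.2 (by linarith)) h2
    have hle : Real.exp (-φ (a + δ)) ≤ Real.exp (-φ z) := Real.exp_le_exp.2 (by linarith)
    exact mul_le_mul_of_nonneg_left hle (pow_nonneg (by linarith) m)
  have hcalc : (∫ z in Set.Ioc a (a + δ), (z - a) ^ m * Real.exp (-φ (a + δ)))
      = Real.exp (-φ (a + δ)) * (δ ^ (m+1) / (m+1)) := by
    rw [← intervalIntegral.integral_of_le (by linarith : a ≤ a + δ)]
    have h3 := intervalIntegral.integral_comp_sub_right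
      (a := a) (b := a + δ) (fun u => u ^ m * Real.exp (-φ (a + δ))) a
    simp only [add_sub_cancel_left] at h3
    rw [h3, intervalIntegral.integral_mul_const, integral_pow]
    ring
  linarith [hcalc ▸ step2]

private lemma stmt6_freq {φ : ℝ → ℝ} (hmono : MonotoneOn φ (Set.Ici 0))
    (htend : ∀ M : ℝ, ∃ A, 0 ≤ A ∧ ∀ x, A ≤ x → M ≤ φ x)
    {ε : ℝ} (hε : 0 < ε) (T : ℝ) :
    ∃ a, 0 ≤ a ∧ T ≤ a ∧ φ (a + Real.exp (-(ε * φ a))) ≤ (1 + ε) * φ a := by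
  by_contra hcon
  push_neg at hcon
  obtain ⟨A, hA0, hA⟩ := htend 1
  set A' : ℝ := max A T with hA'
  have hA'0 : 0 ≤ A' := le_trans hA0 (le_max_left _ _)
  let u : ℕ → ℝ := fun n => Nat.rec A' (fun _ x => x + Real.exp (-(ε * φ x))) n
  have hu0 : u 0 = A' := rfl
  have husucc : ∀ n, u (n+1) = u n + Real.exp (-(ε * φ (u n))) := fun n => rfl
  have hge : ∀ n, A' ≤ u n := by
    intro n
    induction n with
    | zero => exact le_rfl
    | succ n ih => rw [husucc]; nlinarith [Real.exp_pos (-(ε * φ (u n)))]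
  have hφge : ∀ n, (1 + ε) ^ n ≤ φ (u n) := by
    intro n
    induction n with
    | zero => simpa [hu0] using hA A' (le_max_left _ _)
    | succ n ih =>
      have h1 := hcon (u n) (le_trans hA'0 (hge n)) (le_trans (le_max_right A T) (hge n))
      rw [husucc]
      calc (1 + ε) ^ (n + 1) = (1 + ε) * (1 + ε) ^ n := by ring
        _ ≤ (1 + ε) * φ (u n) := by nlinarith
        _ ≤ φ (u n + Real.exp (-(ε * φ (u n)))) := h1.le
  set r : ℝ := Real.exp (-(ε * ε)) with hr
  have hr1 : r < 1 := Real.exp_lt_one_iff.2 (by nlinarith)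
  have hr0 : 0 < r := Real.exp_pos _
  set S : ℝ := 1 / (1 - r) with hS
  have hub : ∀ n, u n ≤ A' + S := by
    intro n
    have hsum : u n ≤ A' + ∑ k ∈ Finset.range n, r ^ k := by
      induction n with
      | zero => simp [hu0]
      | succ n ih =>
        rw [husucc, Finset.sum_range_succ]
        have hstep : Real.exp (-(ε * φ (u n))) ≤ r ^ n := by
          rw [hr, ← Real.exp_nat_mul]
          apply Real.exp_le_exp.2
          have h1 : 1 + (n : ℝ) * ε ≤ (1 + ε) ^ n := one_add_mul_le_pow (by linarith) n
          have h2 := hφge n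
          nlinarith
        linarith
    have hgeo : ∑ k ∈ Finset.range n, r ^ k ≤ S := by
      rw [hS, geom_sum_eq (ne_of_lt hr1) n]
      have h1r : (0:ℝ) < 1 - r := by linarith
      have heq : (r ^ n - 1) / (r - 1) = (1 - r ^ n) / (1 - r) := by
        rw [div_eq_div_iff (by linarith) (by linarith)]; ring
      rw [heq, div_le_div_iff₀ h1r h1r]
      nlinarith [pow_nonneg hr0.le n]
    linarith
  obtain ⟨n, hn⟩ := pow_unbounded_of_one_lt (φ (A' + S)) (by linarith : (1:ℝ) < 1 + ε)
  have hSnn : 0 ≤ S := by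
    rw [hS]
    have : 0 < 1 - r := by linarith
    positivity
  have : φ (u n) ≤ φ (A' + S) :=
    hmono (Set.mem_Ici.2 (le_trans hA'0 (hge n))) (Set.mem_Ici.2 (by linarith)) (hub n)
  linarith [hφge n]

theorem stmt6 (φ : ℝ → ℝ)
    (hmono : MonotoneOn φ (Set.Ici 0))
    (hconv : ConvexOn ℝ (Set.Ici 0) φ)
    (hnonneg : ∀ t ∈ Set.Ici (0 : ℝ), 0 ≤ φ t)
    (hnc : ∃ s t : ℝ, 0 ≤ s ∧ 0 ≤ t ∧ φ s ≠ φ t)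
    (R : ℝ) (hR : 0 < R) (m : ℕ) :
    -1 ≤ Filter.limsup
      (fun t =>
        Real.log (∫ z in Set.Ioi (t * R), (z - t * R) ^ m * Real.exp (-φ z)) / φ (R * t))
      Filter.atTop := by
  obtain ⟨α, hα, β, hlin⟩ := stmt6_linear_lb hmono hconv hnonneg hnc
  have htend : ∀ M : ℝ, ∃ A, 0 ≤ A ∧ ∀ x, A ≤ x → M ≤ φ x := by
    intro M
    refine ⟨max 0 ((M + β)/α), le_max_left _ _, fun x hx => ?_⟩
    have hx0 : 0 ≤ x := le_trans (le_max_left _ _) hx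
    have h1 : (M + β)/α ≤ x := le_trans (le_max_right _ _) hx
    have h2 : M + β ≤ α * x := by
      rw [div_le_iff₀ hα] at h1; linarith
    have := hlin x hx0
    linarith
  have hint : ∀ a : ℝ, 0 ≤ a →
      IntegrableOn (fun z => (z - a) ^ m * Real.exp (-φ z)) (Set.Ioi a) :=
    fun a ha => stmt6_integrable hmono hα hlin m ha
  set I : ℝ → ℝ := fun a => ∫ z in Set.Ioi a, (z - a) ^ m * Real.exp (-φ z) with hI
  have hpos : ∀ a : ℝ, 0 ≤ a → 0 < I a := by
    intro a ha
    have := stmt6_lower_bound hmono m ha one_pos (hint a ha)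
    have h2 : 0 < Real.exp (-φ (a + 1)) * ((1:ℝ) ^ (m+1) / (m+1)) := by positivity
    linarith
  -- boundedness from above
  set C : ℝ := m.factorial * (2/α) ^ m * Real.exp β with hC
  have hgint0 : IntegrableOn (fun z => C * Real.exp (-(α/2) * z)) (Set.Ioi 0) :=
    (exp_neg_integrableOn_Ioi 0 (by positivity)).const_mul C
  set K : ℝ := ∫ z in Set.Ioi (0:ℝ), C * Real.exp (-(α/2) * z) with hK
  have hIK : ∀ a : ℝ, 0 ≤ a → I a ≤ K := by
    intro a ha
    have step1 : I a ≤ ∫ z in Set.Ioi a, C * Real.exp (-(α/2) * z) := by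
      refine setIntegral_mono_on (hint a ha) (hgint0.mono_set (Ioi_subset_Ioi ha))
        measurableSet_Ioi (fun z hz => ?_)
      exact stmt6_dom_pointwise hα hlin m ha hz
    have step2 : (∫ z in Set.Ioi a, C * Real.exp (-(α/2) * z)) ≤ K := by
      refine setIntegral_mono_set hgint0 ?_
        (HasSubset.Subset.eventuallyLE (Ioi_subset_Ioi ha))
      filter_upwards with z
      positivity
    linarith
  have hbdd : IsBoundedUnder (· ≤ ·) Filter.atTop
      (fun t =>
        Real.log (∫ z in Set.Ioi (t * R), (z - t * R) ^ m * Real.exp (-φ z)) / φ (R * t)) := by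
    obtain ⟨A₁, hA₁0, hA₁⟩ := htend 1
    refine isBoundedUnder_of_eventually_le (a := max 0 (Real.log K)) ?_
    filter_upwards [eventually_ge_atTop (max 0 (A₁/R))] with t ht
    show Real.log (I (t * R)) / φ (R * t) ≤ max 0 (Real.log K)
    have ht0 : 0 ≤ t := le_trans (le_max_left _ _) ht
    have ha : 0 ≤ t * R := mul_nonneg ht0 hR.le
    have hA₁t : A₁ ≤ t * R := by
      have := le_trans (le_max_right _ _) ht
      rw [div_le_iff₀ hR] at this
      linarith
    have hφ1 : 1 ≤ φ (R * t) := by rw [mul_comm]; exact hA₁ _ hA₁t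
    have hIpos := hpos _ ha
    have hlog : Real.log (I (t * R)) ≤ Real.log K := Real.log_le_log hIpos (hIK _ ha)
    rcases le_or_gt (Real.log (I (t * R))) 0 with h | h
    · exact le_trans (div_nonpos_of_nonpos_of_nonneg h (by linarith)) (le_max_left _ _)
    · have : Real.log (I (t * R)) / φ (R * t) ≤ Real.log (I (t * R)) :=
        div_le_self h.le hφ1
      exact le_trans (this.trans hlog) (le_max_right _ _)
  have key : ∀ ε : ℝ, 0 < ε → -1 - ε ≤ Filter.limsup
      (fun t =>
        Real.log (∫ z in Set.Ioi (t * R), (z - t * R) ^ m * Real.exp (-φ z)) / φ (R * t))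
      Filter.atTop := by
    intro ε hε
    refine le_limsup_of_frequently_le ?_ hbdd
    rw [Filter.frequently_atTop]
    intro T
    set ε' : ℝ := ε / (2*(m+2)) with hε'
    have hε'pos : 0 < ε' := by positivity
    set M : ℝ := max 1 (2 * Real.log (m+1) / ε) with hM
    obtain ⟨A₀, hA₀0, hA₀⟩ := htend M
    obtain ⟨a, ha0, haT, hkey⟩ := stmt6_freq hmono htend hε'pos (max (T*R) A₀)
    have hφM : M ≤ φ a := hA₀ a (le_trans (le_max_right _ _) haT)
    have hφ1 : 1 ≤ φ a := le_trans (le_max_left _ _) hφM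
    have hφpos : 0 < φ a := by linarith
    have hlogm : 2 * Real.log (m+1) ≤ ε * φ a := by
      have h1 : 2 * Real.log (m+1) / ε ≤ φ a := le_trans (le_max_right _ _) hφM
      rw [div_le_iff₀ hε] at h1
      linarith
    set δ : ℝ := Real.exp (-(ε' * φ a)) with hδ
    have hδpos : 0 < δ := Real.exp_pos _
    refine ⟨a / R, ?_, ?_⟩
    · rw [le_div_iff₀ hR]
      exact le_trans (le_max_left _ _) haT
    · have htR : a / R * R = a := div_mul_cancel₀ a (ne_of_gt hR)
      have hRt : R * (a / R) = a := by rw [mul_comm]; exact htR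
      show -1 - ε ≤ Real.log (∫ z in Set.Ioi (a / R * R),
        (z - a / R * R) ^ m * Real.exp (-φ z)) / φ (R * (a / R))
      rw [htR, hRt]
      show -1 - ε ≤ Real.log (I a) / φ a
      have hlb := stmt6_lower_bound hmono m ha0 hδpos (hint a ha0)
      have hlbpos : 0 < Real.exp (-φ (a + δ)) * (δ ^ (m+1) / (m+1)) := by positivity
      have hlog1 : Real.log (Real.exp (-φ (a + δ)) * (δ ^ (m+1) / (m+1)))
          ≤ Real.log (I a) := Real.log_le_log hlbpos hlb
      have hlogeq : Real.log (Real.exp (-φ (a + δ)) * (δ ^ (m+1) / (m+1)))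
          = -φ (a + δ) + ((m+1) * -(ε' * φ a) - Real.log (m+1)) := by
        rw [Real.log_mul (Real.exp_pos _).ne' (by positivity),
          Real.log_exp, Real.log_div (by positivity) (by positivity),
          Real.log_pow, hδ, Real.log_exp]
        push_cast
        ring
      have hm2 : ((m:ℝ) + 2) * ε' = ε / 2 := by
        rw [hε']; field_simp
      rw [le_div_iff₀ hφpos]
      have hlogmn : (0:ℝ) ≤ Real.log (m+1) := by
        apply Real.log_nonneg
        push_cast
        linarith [Nat.cast_nonneg (α := ℝ) m]
      have hk2 : φ (a + δ) ≤ (1 + ε') * φ a := hkey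
      nlinarith [hlogeq ▸ hlog1]
  -- conclude
  by_contra hfin
  push_neg at hfin
  have := key ((-1 - Filter.limsup
      (fun t =>
        Real.log (∫ z in Set.Ioi (t * R), (z - t * R) ^ m * Real.exp (-φ z)) / φ (R * t))
      Filter.atTop)/2) (by linarith)
  linarith
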